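/- Let (Ω, μ) be a probability space, let d, h ∈ ℕ, and let W : ℝ^d → ℝ^h be a continuous linear map (the shared weight matrix of a 1-layer GCN) with operator norm ‖W‖. Let n ≥ 0 and suppose node u in the source network has neighbors indexed by j ∈ Fin n with (random) augmented attribute vectors x̂ⱼˢ : Ω → ℝ^d, and node v in the target network has neighbors matched one-to-one to those of u (the ACN assumption) with attribute vectors x̂ⱼᵗ : Ω → ℝ^d; let x̂ᵤ, x̂ᵥ : Ω → ℝ^d be the attribute vectors of u and v. Assume all these maps are Bochner integrable. Define the pre-activation GCN outputs with mean aggregation over the node and its neighbors: ĥᵤ(ω) = W((1/(n+1))(x̂ᵤ(ω) + Σⱼ x̂ⱼˢ(ω))) and ĥᵥ(ω) = W((1/(n+1))(x̂ᵥ(ω) + Σⱼ x̂ⱼᵗ(ω))). If for some ε > 0 we have 𝔼[‖x̂ᵤ − x̂ᵥ‖₂] ≤ ε and 𝔼[‖x̂ⱼˢ − x̂ⱼᵗ‖₂] ≤ ε for every j ∈ Fin n, then 𝔼[‖ĥᵤ − ĥᵥ‖₂] ≤ ‖W‖ · ε. -/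

import Mathlib

open MeasureTheory

/-- **Theorem 3.1 (probabilistic form).** For a ground-truth node pair `(u, v)` whose `n`
neighbors are matched one-to-one (the ACN assumption), if the expected Euclidean distances
between the (random) augmented attribute vectors of `u` and `v` and between each matched
neighbor pair are all at most `ε`, then the expected Euclidean distance between the
pre-activation 1-layer GCN outputs (mean aggregation followed by the shared weight map `W`)
is at most `‖W‖ * ε`. -/
theorem grad_align_plus_thm31_expectation
    {Ω : Type*} [MeasurableSpace Ω] (μ : Measure Ω) [IsProbabilityMeasure μ]
    (d h n : ℕ)
    (W : EuclideanSpace ℝ (Fin d) →L[ℝ] EuclideanSpace ℝ (Fin h))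
    (xu xv : Ω → EuclideanSpace ℝ (Fin d))
    (xs xt : Fin n → Ω → EuclideanSpace ℝ (Fin d))
    (hxu : Integrable xu μ) (hxv : Integrable xv μ)
    (hxs : ∀ j, Integrable (xs j) μ) (hxt : ∀ j, Integrable (xt j) μ)
    (hu hv : Ω → EuclideanSpace ℝ (Fin h))
    (hhu : ∀ ω, hu ω = W ((1 / ((n : ℝ) + 1)) • (xu ω + ∑ j, xs j ω)))
    (hhv : ∀ ω, hv ω = W ((1 / ((n : ℝ) + 1)) • (xv ω + ∑ j, xt j ω)))
    (ε : ℝ) (hε : 0 < ε)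
    (huv : (∫ ω, ‖xu ω - xv ω‖ ∂μ) ≤ ε)
    (hst : ∀ j, (∫ ω, ‖xs j ω - xt j ω‖ ∂μ) ≤ ε) :
    (∫ ω, ‖hu ω - hv ω‖ ∂μ) ≤ ‖W‖ * ε := by
  set c : ℝ := 1 / ((n : ℝ) + 1) with hc
  have hcpos : 0 < c := by positivity
  -- pointwise bound
  have hpt : ∀ ω, ‖hu ω - hv ω‖ ≤
      ‖W‖ * c * (‖xu ω - xv ω‖ + ∑ j, ‖xs j ω - xt j ω‖) := by
    intro ω
    rw [hhu ω, hhv ω, ← map_sub]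
    calc ‖W (c • (xu ω + ∑ j, xs j ω) - c • (xv ω + ∑ j, xt j ω))‖
        ≤ ‖W‖ * ‖c • (xu ω + ∑ j, xs j ω) - c • (xv ω + ∑ j, xt j ω)‖ :=
          W.le_opNorm _
      _ = ‖W‖ * (c * ‖(xu ω - xv ω) + ∑ j, (xs j ω - xt j ω)‖) := by
          rw [← smul_sub, norm_smul, Real.norm_eq_abs, abs_of_pos hcpos]
          congr 2
          rw [Finset.sum_sub_distrib]
          abel
      _ ≤ ‖W‖ * (c * (‖xu ω - xv ω‖ + ‖∑ j, (xs j ω - xt j ω)‖)) := by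
          gcongr
          exact norm_add_le _ _
      _ ≤ ‖W‖ * (c * (‖xu ω - xv ω‖ + ∑ j, ‖xs j ω - xt j ω‖)) := by
          gcongr
          exact norm_sum_le _ _
      _ = ‖W‖ * c * (‖xu ω - xv ω‖ + ∑ j, ‖xs j ω - xt j ω‖) := by ring
  -- integrability of the bounding function
  have hint : Integrable
      (fun ω => ‖W‖ * c * (‖xu ω - xv ω‖ + ∑ j, ‖xs j ω - xt j ω‖)) μ := by
    apply Integrable.const_mul
    exact ((hxu.sub hxv).norm.add
      (integrable_finset_sum _ fun j _ => ((hxs j).sub (hxt j)).norm))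
  have h1 : (∫ ω, ‖hu ω - hv ω‖ ∂μ) ≤
      ∫ ω, ‖W‖ * c * (‖xu ω - xv ω‖ + ∑ j, ‖xs j ω - xt j ω‖) ∂μ := by
    apply integral_mono_of_nonneg
    · filter_upwards with ω using norm_nonneg _
    · exact hint
    · filter_upwards with ω using hpt ω
  refine h1.trans ?_
  have e1 : Integrable (fun ω => ‖xu ω - xv ω‖) μ := (hxu.sub hxv).norm
  have e2 : Integrable (fun ω => ∑ j, ‖xs j ω - xt j ω‖) μ :=
    integrable_finset_sum _ fun j _ => ((hxs j).sub (hxt j)).norm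
  rw [integral_const_mul, integral_add e1 e2,
      integral_finset_sum (f := fun j ω => ‖xs j ω - xt j ω‖) Finset.univ (fun j _ => ((hxs j).sub (hxt j)).norm)]
  have hsum : (∫ ω, ‖xu ω - xv ω‖ ∂μ) + ∑ j, (∫ ω, ‖xs j ω - xt j ω‖ ∂μ)
      ≤ ((n : ℝ) + 1) * ε := by
    have : ∑ j : Fin n, (∫ ω, ‖xs j ω - xt j ω‖ ∂μ) ≤ (n : ℝ) * ε := by
      calc ∑ j : Fin n, (∫ ω, ‖xs j ω - xt j ω‖ ∂μ)
          ≤ ∑ _j : Fin n, ε := Finset.sum_le_sum fun j _ => hst j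
        _ = (n : ℝ) * ε := by simp [mul_comm]
    linarith
  calc ‖W‖ * c * ((∫ ω, ‖xu ω - xv ω‖ ∂μ) + ∑ j, (∫ ω, ‖xs j ω - xt j ω‖ ∂μ))
      ≤ ‖W‖ * c * (((n : ℝ) + 1) * ε) := by
        have : (0:ℝ) ≤ ‖W‖ * c := by positivity
        exact mul_le_mul_of_nonneg_left hsum this
    _ = ‖W‖ * ε := by
        rw [hc]; field_simp
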